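/- Derivative rule for the Clifford–Fourier transform: for a ∈ ℝⁿ and f sufficiently smooth and decaying, 𝓕^i{a·∇f}(w) = (a·w) 𝓕^i{f}(w) i, where a·∇f is the directional derivative of f in direction a and a·w is the scalar product of a and w. -/

import Mathlib

open MeasureTheory Finset Filter
noncomputable section

/-- Model of the real Clifford algebra `Cl(p,q)` (with `n = p + q`) as the space of
coordinate functions on the canonical graded basis `{e_A : A ⊆ {1,…,n}}`. -/
abbrev Cl (n : ℕ) := Finset (Fin n) → ℝ

/-- The signature signs: `ε_k = 1` for `k < p`, `ε_k = -1` otherwise. -/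
def eps (p : ℕ) {n : ℕ} (k : Fin n) : ℝ := if (k : ℕ) < p then 1 else -1

/-- The sign in `e_A e_B = clSign p A B • e_{A Δ B}`: reordering parity times signature signs. -/
def clSign (p : ℕ) {n : ℕ} (A B : Finset (Fin n)) : ℝ :=
  (-1 : ℝ) ^ ((A ×ˢ B).filter (fun ab => ab.2 < ab.1)).card * ∏ k ∈ A ∩ B, eps p k

/-- The geometric (Clifford) product on `Cl(p,q)`. -/
def clMul (p : ℕ) {n : ℕ} (x y : Cl n) : Cl n :=
  fun C => ∑ A : Finset (Fin n), ∑ B : Finset (Fin n),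
    if symmDiff A B = C then x A * y B * clSign p A B else 0

/-- The unit `1 = e_∅` of the Clifford algebra. -/
def clOne (n : ℕ) : Cl n := fun C => if C = ∅ then 1 else 0

/-- The principal reverse `α̃`. -/
def clRev (p : ℕ) {n : ℕ} (x : Cl n) : Cl n :=
  fun A => (-1 : ℝ) ^ (A.card * (A.card - 1) / 2) * (∏ k ∈ A, eps p k) * x A

/-- Squared modulus `|M|² = Σ_A M_A²` of a multivector. -/
def modSq {n : ℕ} (M : Cl n) : ℝ := ∑ A : Finset (Fin n), M A ^ 2

/-- Modulus `|M|` of a multivector. -/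
def clMod {n : ℕ} (M : Cl n) : ℝ := Real.sqrt (modSq M)

/-- `i` is a square root of `-1` in `Cl(p,q)`. -/
def isRoot (p : ℕ) {n : ℕ} (i : Cl n) : Prop := clMul p i i = - clOne n

/-- `u(x,w) = Σ_l x_l w_l`. -/
def uu {n : ℕ} (x w : Fin n → ℝ) : ℝ := ∑ l, x l * w l

/-- The kernel `e^{-i u(x,w)} = cos(u(x,w)) - sin(u(x,w)) i`. -/
def kernelMinus {n : ℕ} (i : Cl n) (x w : Fin n → ℝ) : Cl n :=
  Real.cos (uu x w) • clOne n - Real.sin (uu x w) • i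

/-- The kernel `e^{i u(x,w)} = cos(u(x,w)) + sin(u(x,w)) i`. -/
def kernelPlus {n : ℕ} (i : Cl n) (x w : Fin n → ℝ) : Cl n :=
  Real.cos (uu x w) • clOne n + Real.sin (uu x w) • i

/-- The Clifford–Fourier transform `𝓕^i{f}(w) = ∫ f(x) e^{-i u(x,w)} dⁿx`. -/
def cft (p : ℕ) {n : ℕ} (i : Cl n) (f : (Fin n → ℝ) → Cl n) (w : Fin n → ℝ) : Cl n :=
  ∫ x : Fin n → ℝ, clMul p (f x) (kernelMinus i x w)

namespace CFA
variable {n : ℕ} {p : ℕ}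

lemma eps_mul_self (p : ℕ) (k : Fin n) : eps p k * eps p k = 1 := by
  unfold eps; split <;> norm_num

def NN {n : ℕ} (A B : Finset (Fin n)) : ℕ :=
  ((A ×ˢ B).filter (fun ab => ab.2 < ab.1)).card

lemma NN_union_left {A B C : Finset (Fin n)} (h : Disjoint A B) :
    NN (A ∪ B) C = NN A C + NN B C := by
  unfold NN
  rw [Finset.union_product, Finset.filter_union, Finset.card_union_of_disjoint]
  refine Finset.disjoint_filter_filter ?_
  rw [Finset.disjoint_left]
  rintro ⟨a, c⟩ ha hb
  simp only [Finset.mem_product] at ha hb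
  exact (Finset.disjoint_left.1 h) ha.1 hb.1

lemma NN_union_right {A B C : Finset (Fin n)} (h : Disjoint B C) :
    NN A (B ∪ C) = NN A B + NN A C := by
  unfold NN
  rw [Finset.product_union, Finset.filter_union, Finset.card_union_of_disjoint]
  refine Finset.disjoint_filter_filter ?_
  rw [Finset.disjoint_left]
  rintro ⟨a, c⟩ ha hb
  simp only [Finset.mem_product] at ha hb
  exact (Finset.disjoint_left.1 h) ha.2 hb.2

lemma NN_symmDiff_left (A B C : Finset (Fin n)) :
    NN (symmDiff A B) C + 2 * NN (A ∩ B) C = NN A C + NN B C := by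
  have hA : NN A C = NN (A \ B) C + NN (A ∩ B) C := by
    rw [← NN_union_left (disjoint_sdiff_inter _ _), Finset.sdiff_union_inter]
  have hB : NN B C = NN (B \ A) C + NN (A ∩ B) C := by
    rw [Finset.inter_comm, ← NN_union_left (disjoint_sdiff_inter _ _), Finset.sdiff_union_inter]
  have hS : NN (symmDiff A B) C = NN (A \ B) C + NN (B \ A) C := by
    rw [symmDiff_def, sup_eq_union,
      NN_union_left (disjoint_sdiff_sdiff)]
  omega

lemma NN_symmDiff_right (A B C : Finset (Fin n)) :
    NN A (symmDiff B C) + 2 * NN A (B ∩ C) = NN A B + NN A C := by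
  have hA : NN A B = NN A (B \ C) + NN A (B ∩ C) := by
    rw [← NN_union_right (disjoint_sdiff_inter _ _), Finset.sdiff_union_inter]
  have hB : NN A C = NN A (C \ B) + NN A (B ∩ C) := by
    rw [Finset.inter_comm, ← NN_union_right (disjoint_sdiff_inter _ _), Finset.sdiff_union_inter]
  have hS : NN A (symmDiff B C) = NN A (B \ C) + NN A (C \ B) := by
    rw [symmDiff_def, sup_eq_union, NN_union_right (disjoint_sdiff_sdiff)]
  omega

lemma prod_eps_symmDiff (p : ℕ) (S T : Finset (Fin n)) :
    (∏ k ∈ S, eps p k) * ∏ k ∈ T, eps p k = ∏ k ∈ symmDiff S T, eps p k := by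
  have hS : ∏ k ∈ S, eps p k = (∏ k ∈ S \ T, eps p k) * ∏ k ∈ S ∩ T, eps p k := by
    rw [← Finset.prod_union (disjoint_sdiff_inter _ _), Finset.sdiff_union_inter]
  have hT : ∏ k ∈ T, eps p k = (∏ k ∈ T \ S, eps p k) * ∏ k ∈ S ∩ T, eps p k := by
    rw [Finset.inter_comm, ← Finset.prod_union (disjoint_sdiff_inter _ _), Finset.sdiff_union_inter]
  have hST : ∏ k ∈ symmDiff S T, eps p k = (∏ k ∈ S \ T, eps p k) * ∏ k ∈ T \ S, eps p k := by
    rw [symmDiff_def, sup_eq_union, Finset.prod_union disjoint_sdiff_sdiff]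
  have : (∏ k ∈ S ∩ T, eps p k) * (∏ k ∈ S ∩ T, eps p k) = 1 := by
    rw [← Finset.prod_mul_distrib]
    exact Finset.prod_eq_one fun k _ => eps_mul_self p k
  rw [hS, hT, hST]
  calc (∏ k ∈ S \ T, eps p k) * (∏ k ∈ S ∩ T, eps p k) *
        ((∏ k ∈ T \ S, eps p k) * (∏ k ∈ S ∩ T, eps p k))
      = ((∏ k ∈ S \ T, eps p k) * (∏ k ∈ T \ S, eps p k)) *
        ((∏ k ∈ S ∩ T, eps p k) * (∏ k ∈ S ∩ T, eps p k)) := by ring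
    _ = _ := by rw [this, mul_one]

lemma neg_one_pow_eq_of {s t a b : ℕ} (h : s + 2 * a = t + 2 * b) :
    (-1 : ℝ) ^ s = (-1 : ℝ) ^ t := by
  have h1 : ((-1 : ℝ)) ^ (s + 2 * a) = (-1 : ℝ) ^ (t + 2 * b) := by rw [h]
  rwa [pow_add, pow_add, pow_mul, pow_mul, neg_one_sq, one_pow, one_pow, mul_one, mul_one] at h1

lemma clSign_eq (A B : Finset (Fin n)) :
    clSign p A B = (-1 : ℝ) ^ NN A B * ∏ k ∈ A ∩ B, eps p k := rfl

lemma clSign_assoc (A B C : Finset (Fin n)) :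
    clSign p A B * clSign p (symmDiff A B) C = clSign p B C * clSign p A (symmDiff B C) := by
  simp only [clSign_eq]
  have hsign : (-1 : ℝ) ^ NN A B * (-1 : ℝ) ^ NN (symmDiff A B) C
      = (-1 : ℝ) ^ NN B C * (-1 : ℝ) ^ NN A (symmDiff B C) := by
    rw [← pow_add, ← pow_add]
    apply neg_one_pow_eq_of (a := NN (A ∩ B) C) (b := NN A (B ∩ C))
    have h1 := NN_symmDiff_left A B C
    have h2 := NN_symmDiff_right A B C
    omega
  have heps : (∏ k ∈ A ∩ B, eps p k) * ∏ k ∈ symmDiff A B ∩ C, eps p k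
      = (∏ k ∈ B ∩ C, eps p k) * ∏ k ∈ A ∩ symmDiff B C, eps p k := by
    rw [prod_eps_symmDiff, prod_eps_symmDiff]
    congr 1
    ext k
    simp only [Finset.mem_symmDiff, Finset.mem_inter]
    tauto
  calc (-1:ℝ) ^ NN A B * (∏ k ∈ A ∩ B, eps p k) *
        ((-1:ℝ) ^ NN (symmDiff A B) C * ∏ k ∈ symmDiff A B ∩ C, eps p k)
      = ((-1:ℝ) ^ NN A B * (-1:ℝ) ^ NN (symmDiff A B) C) *
        ((∏ k ∈ A ∩ B, eps p k) * ∏ k ∈ symmDiff A B ∩ C, eps p k) := by ring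
    _ = ((-1:ℝ) ^ NN B C * (-1:ℝ) ^ NN A (symmDiff B C)) *
        ((∏ k ∈ B ∩ C, eps p k) * ∏ k ∈ A ∩ symmDiff B C, eps p k) := by rw [hsign, heps]
    _ = _ := by ring


lemma clSign_empty_left (B : Finset (Fin n)) : clSign p ∅ B = 1 := by
  simp [clSign_eq, NN]

lemma clSign_empty_right (A : Finset (Fin n)) : clSign p A ∅ = 1 := by
  simp [clSign_eq, NN]

lemma clMul_one_left (x : Cl n) : clMul p (clOne n) x = x := by
  funext C
  unfold clMul clOne
  rw [Finset.sum_eq_single ∅]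
  · simp only [clSign_empty_left, if_pos rfl, one_mul, mul_one, symmDiff_def,
      Finset.empty_sdiff, Finset.sdiff_empty, Finset.sup_eq_union, Finset.empty_union]
    simp [Finset.sum_ite_eq']
  · intro A _ hA
    simp [hA]
  · simp

lemma clMul_one_right (x : Cl n) : clMul p x (clOne n) = x := by
  funext C
  unfold clMul clOne
  have : ∀ A : Finset (Fin n), (∑ B : Finset (Fin n),
      if symmDiff A B = C then x A * (if B = ∅ then 1 else 0) * clSign p A B else 0)
      = if A = C then x A else 0 := by
    intro A
    rw [Finset.sum_eq_single ∅]
    · simp only [clSign_empty_right, if_pos rfl, mul_one, symmDiff_def,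
        Finset.empty_sdiff, Finset.sdiff_empty, Finset.sup_eq_union, Finset.union_empty]
      simp
    · intro B _ hB; simp [hB]
    · simp
  rw [Finset.sum_congr rfl fun A _ => this A]
  simp [Finset.sum_ite_eq']

lemma clMul_add_left (x x' y : Cl n) :
    clMul p (x + x') y = clMul p x y + clMul p x' y := by
  funext C
  simp only [clMul, Pi.add_apply, ← Finset.sum_add_distrib]
  refine Finset.sum_congr rfl fun A _ => ?_
  refine Finset.sum_congr rfl fun B _ => ?_
  split_ifs <;> ring

lemma clMul_add_right (x y y' : Cl n) :
    clMul p x (y + y') = clMul p x y + clMul p x y' := by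
  funext C
  simp only [clMul, Pi.add_apply, ← Finset.sum_add_distrib]
  refine Finset.sum_congr rfl fun A _ => ?_
  refine Finset.sum_congr rfl fun B _ => ?_
  split_ifs <;> ring

lemma clMul_smul_left (r : ℝ) (x y : Cl n) :
    clMul p (r • x) y = r • clMul p x y := by
  funext C
  simp only [clMul, Pi.smul_apply, smul_eq_mul, Finset.mul_sum]
  refine Finset.sum_congr rfl fun A _ => ?_
  refine Finset.sum_congr rfl fun B _ => ?_
  split_ifs <;> ring

lemma clMul_smul_right (r : ℝ) (x y : Cl n) :
    clMul p x (r • y) = r • clMul p x y := by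
  funext C
  simp only [clMul, Pi.smul_apply, smul_eq_mul, Finset.mul_sum]
  refine Finset.sum_congr rfl fun A _ => ?_
  refine Finset.sum_congr rfl fun B _ => ?_
  split_ifs <;> ring

lemma sum_collapse {g : Finset (Fin n) → ℝ} (V : Finset (Fin n)) :
    (∑ C : Finset (Fin n), if V = C then g C else 0) = g V := by
  rw [Finset.sum_ite_eq]
  simp

lemma sum4_reorder {α : Type*} [Fintype α] (t : α → α → α → α → ℝ) :
    (∑ C, ∑ E, ∑ A, ∑ B, t C E A B) = ∑ A, ∑ B, ∑ E, ∑ C, t C E A B := by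
  have h1 : ∀ C, (∑ E, ∑ A, ∑ B, t C E A B) = ∑ A, ∑ B, ∑ E, t C E A B := by
    intro C
    rw [Finset.sum_comm]
    exact Finset.sum_congr rfl fun A _ => Finset.sum_comm
  simp only [h1]
  rw [Finset.sum_comm]
  refine Finset.sum_congr rfl fun A _ => ?_
  rw [Finset.sum_comm]
  exact Finset.sum_congr rfl fun B _ => Finset.sum_comm

lemma sum3_reorder {α : Type*} [Fintype α] (t : α → α → α → ℝ) :
    (∑ C, ∑ B, ∑ E, t C B E) = ∑ B, ∑ E, ∑ C, t C B E := by
  rw [Finset.sum_comm]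
  exact Finset.sum_congr rfl fun B _ => Finset.sum_comm

lemma clMul_assoc (x y z : Cl n) :
    clMul p (clMul p x y) z = clMul p x (clMul p y z) := by
  funext D
  unfold clMul
  calc ∑ C : Finset (Fin n), ∑ E : Finset (Fin n),
        (if symmDiff C E = D then
          (∑ A : Finset (Fin n), ∑ B : Finset (Fin n),
            if symmDiff A B = C then x A * y B * clSign p A B else 0) * z E * clSign p C E else 0)
      = ∑ C : Finset (Fin n), ∑ E : Finset (Fin n), ∑ A : Finset (Fin n), ∑ B : Finset (Fin n),
          (if symmDiff A B = C then
            (if symmDiff C E = D then x A * y B * z E * (clSign p A B * clSign p C E) else 0)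
          else 0) := by
        refine Finset.sum_congr rfl fun C _ => Finset.sum_congr rfl fun E _ => ?_
        split_ifs with h
        · rw [Finset.sum_mul, Finset.sum_mul]
          refine Finset.sum_congr rfl fun A _ => ?_
          rw [Finset.sum_mul, Finset.sum_mul]
          refine Finset.sum_congr rfl fun B _ => ?_
          split_ifs with h2
          · ring
          · simp
        · simp [h]
    _ = ∑ A : Finset (Fin n), ∑ B : Finset (Fin n), ∑ E : Finset (Fin n), ∑ C : Finset (Fin n),
          (if symmDiff A B = C then
            (if symmDiff C E = D then x A * y B * z E * (clSign p A B * clSign p C E) else 0)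
          else 0) := by
        exact sum4_reorder _
    _ = ∑ A : Finset (Fin n), ∑ B : Finset (Fin n), ∑ E : Finset (Fin n),
          (if symmDiff (symmDiff A B) E = D then
            x A * y B * z E * (clSign p A B * clSign p (symmDiff A B) E) else 0) := by
        refine Finset.sum_congr rfl fun A _ => Finset.sum_congr rfl fun B _ =>
          Finset.sum_congr rfl fun E _ => ?_
        exact sum_collapse (symmDiff A B)
    _ = ∑ A : Finset (Fin n), ∑ B : Finset (Fin n), ∑ E : Finset (Fin n),
          (if symmDiff A (symmDiff B E) = D then
            x A * y B * z E * (clSign p B E * clSign p A (symmDiff B E)) else 0) := by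
        refine Finset.sum_congr rfl fun A _ => Finset.sum_congr rfl fun B _ =>
          Finset.sum_congr rfl fun E _ => ?_
        rw [symmDiff_assoc, clSign_assoc]
    _ = ∑ A : Finset (Fin n), ∑ B : Finset (Fin n), ∑ E : Finset (Fin n), ∑ C : Finset (Fin n),
          (if symmDiff B E = C then
            (if symmDiff A C = D then x A * y B * z E * (clSign p B E * clSign p A C) else 0)
          else 0) := by
        refine Finset.sum_congr rfl fun A _ => Finset.sum_congr rfl fun B _ =>
          Finset.sum_congr rfl fun E _ => ?_
        exact (sum_collapse (g := fun C => if symmDiff A C = D then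
          x A * y B * z E * (clSign p B E * clSign p A C) else 0) (symmDiff B E)).symm
    _ = ∑ A : Finset (Fin n), ∑ C : Finset (Fin n),
          (if symmDiff A C = D then
            x A * (∑ B : Finset (Fin n), ∑ E : Finset (Fin n),
              if symmDiff B E = C then y B * z E * clSign p B E else 0) * clSign p A C else 0) := by
        refine Finset.sum_congr rfl fun A _ => ?_
        rw [← sum3_reorder (fun C B E => if symmDiff B E = C then
          (if symmDiff A C = D then x A * y B * z E * (clSign p B E * clSign p A C) else 0) else 0)]
        refine Finset.sum_congr rfl fun C _ => ?_
        split_ifs with h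
        · rw [Finset.mul_sum, Finset.sum_mul]
          refine Finset.sum_congr rfl fun B _ => ?_
          rw [Finset.mul_sum, Finset.sum_mul]
          refine Finset.sum_congr rfl fun E _ => ?_
          split_ifs with h2
          · ring
          · simp
        · simp [h]


variable {n : ℕ} {p : ℕ}

/-- The Clifford product as a continuous bilinear map. -/
def Bmul (p n : ℕ) : Cl n →L[ℝ] Cl n →L[ℝ] Cl n :=
  LinearMap.toContinuousLinearMap <|
    (LinearMap.toContinuousLinearMap.toLinearMap).comp <|
      LinearMap.mk₂ ℝ (clMul p) clMul_add_left clMul_smul_left clMul_add_right clMul_smul_right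

@[simp] lemma Bmul_apply (x y : Cl n) : Bmul p n x y = clMul p x y := rfl

attribute [irreducible] Bmul

lemma uu_add_smul (x a w : Fin n → ℝ) (t : ℝ) :
    uu (x + t • a) w = uu x w + t * uu a w := by
  simp only [uu, Pi.add_apply, Pi.smul_apply, smul_eq_mul, add_mul, Finset.sum_add_distrib,
    Finset.mul_sum, mul_assoc]

lemma continuous_uu (w : Fin n → ℝ) : Continuous (fun x : Fin n → ℝ => uu x w) := by
  unfold uu
  exact continuous_finset_sum _ fun l _ => (continuous_apply l).mul continuous_const

lemma continuous_kernel (i : Cl n) (w : Fin n → ℝ) :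
    Continuous (fun x : Fin n → ℝ => kernelMinus i x w) := by
  unfold kernelMinus
  exact ((Real.continuous_cos.comp (continuous_uu w)).smul continuous_const).sub
    ((Real.continuous_sin.comp (continuous_uu w)).smul continuous_const)

lemma kernel_norm_le (i : Cl n) (x w : Fin n → ℝ) :
    ‖kernelMinus i x w‖ ≤ ‖clOne n‖ + ‖i‖ := by
  unfold kernelMinus
  refine (norm_sub_le _ _).trans ?_
  rw [norm_smul, norm_smul, Real.norm_eq_abs, Real.norm_eq_abs]
  have h1 := Real.abs_cos_le_one (uu x w)
  have h2 := Real.abs_sin_le_one (uu x w)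
  have n1 : (0:ℝ) ≤ ‖clOne n‖ := norm_nonneg _
  have n2 : (0:ℝ) ≤ ‖i‖ := norm_nonneg _
  nlinarith [abs_nonneg (Real.cos (uu x w)), abs_nonneg (Real.sin (uu x w))]

lemma kernel_mul_i (i : Cl n) (hi : clMul p i i = - clOne n) (x w : Fin n → ℝ) :
    clMul p (kernelMinus i x w) i
      = Real.sin (uu x w) • clOne n + Real.cos (uu x w) • i := by
  unfold kernelMinus
  rw [sub_eq_add_neg, ← neg_smul, clMul_add_left, clMul_smul_left, clMul_smul_left,
    clMul_one_left, hi]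
  module

lemma hasLineDerivAt_kernel (i : Cl n) (hi : clMul p i i = - clOne n)
    (w a : Fin n → ℝ) (x : Fin n → ℝ) :
    HasLineDerivAt ℝ (fun x => kernelMinus i x w)
      (-(uu a w) • clMul p (kernelMinus i x w) i) x a := by
  unfold HasLineDerivAt
  set u0 := uu x w
  set cv := uu a w
  have hEq : (fun t : ℝ => kernelMinus i (x + t • a) w)
      = fun t : ℝ => Real.cos (u0 + t * cv) • clOne n - Real.sin (u0 + t * cv) • i := by
    funext t
    rw [kernelMinus, uu_add_smul]
  rw [hEq]
  have hu : HasDerivAt (fun t : ℝ => u0 + t * cv) cv 0 := by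
    simpa using (hasDerivAt_mul_const cv).const_add u0
  have hc : HasDerivAt (fun t : ℝ => Real.cos (u0 + t * cv)) (-Real.sin u0 * cv) 0 := by
    have := (Real.hasDerivAt_cos (u0 + 0 * cv)).comp 0 hu
    simpa [Function.comp_def] using this
  have hs : HasDerivAt (fun t : ℝ => Real.sin (u0 + t * cv)) (Real.cos u0 * cv) 0 := by
    have := (Real.hasDerivAt_sin (u0 + 0 * cv)).comp 0 hu
    simpa [Function.comp_def] using this
  have hD := (hc.smul_const (clOne n)).sub (hs.smul_const i)
  convert hD using 1
  · rfl
  rw [kernel_mul_i (p := p) i hi]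
  module

lemma integrable_B_pair {h g : (Fin n → ℝ) → Cl n} (hh : Integrable h)
    (hg : Continuous g) {C : ℝ} (hgC : ∀ x, ‖g x‖ ≤ C) :
    Integrable (fun x => Bmul p n (h x) (g x)) := by
  have hm : AEStronglyMeasurable (fun x => Bmul p n (h x) (g x)) volume :=
    ((Bmul p n).continuous₂).comp_aestronglyMeasurable
      (hh.1.prodMk hg.aestronglyMeasurable)
  refine (hh.norm.const_mul (‖Bmul p n‖ * C)).mono' hm (Filter.Eventually.of_forall fun x => ?_)
  calc ‖Bmul p n (h x) (g x)‖ ≤ ‖Bmul p n‖ * ‖h x‖ * ‖g x‖ := (Bmul p n).le_opNorm₂ _ _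
    _ ≤ ‖Bmul p n‖ * ‖h x‖ * C := by
        have h1 : (0:ℝ) ≤ ‖Bmul p n‖ := (Bmul p n).opNorm_nonneg
        exact mul_le_mul_of_nonneg_left (hgC x) (mul_nonneg h1 (norm_nonneg _))
    _ = ‖Bmul p n‖ * C * ‖h x‖ := by ring


end CFA

set_option maxHeartbeats 2000000 in
/-- Derivative rule: `𝓕^i{a·∇f}(w) = (a·w) 𝓕^i{f}(w) i`. -/
theorem cft_directional_deriv (p q : ℕ) (i : Cl (p + q)) (hi : isRoot p i)
    (hrev : clRev p i = -i)
    (f : (Fin (p + q) → ℝ) → Cl (p + q)) (hf : Differentiable ℝ f)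
    (hint : Integrable f) (a : Fin (p + q) → ℝ)
    (hint' : Integrable (fun x => lineDeriv ℝ f x a))
    (hdecay : Tendsto f (cocompact (Fin (p + q) → ℝ)) (nhds 0))
    (w : Fin (p + q) → ℝ) :
    cft p i (fun x => lineDeriv ℝ f x a) w =
      (∑ l, a l * w l) • clMul p (cft p i f w) i := by
  classical
  have hi' : clMul p i i = - clOne (p + q) := hi
  set K : (Fin (p+q) → ℝ) → Cl (p+q) := fun x => kernelMinus i x w with hK
  set cv : ℝ := uu a w with hcv
  set B := CFA.Bmul p (p+q) with hB
  set g' : (Fin (p+q) → ℝ) → Cl (p+q) := fun x => (-cv) • clMul p (K x) i with hg'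
  have hCb : ∀ x, ‖K x‖ ≤ ‖clOne (p+q)‖ + ‖i‖ := fun x => CFA.kernel_norm_le i x w
  have hKcont : Continuous K := CFA.continuous_kernel i w
  have hg'cont : Continuous g' := by
    refine Continuous.smul (f := fun _ => -cv) (g := fun x => clMul p (K x) i) continuous_const ?_
    have : (fun x => clMul p (K x) i) = fun x => (B.flip i) (K x) := by
      funext x; simp [hB]
    rw [this]
    exact (B.flip i).continuous.comp hKcont
  have hg'bound : ∀ x, ‖g' x‖ ≤ |cv| * (‖B‖ * (‖clOne (p+q)‖ + ‖i‖) * ‖i‖) := by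
    intro x
    rw [hg']
    simp only [norm_smul, Real.norm_eq_abs, abs_neg]
    have h1 : ‖clMul p (K x) i‖ ≤ ‖B‖ * (‖clOne (p+q)‖ + ‖i‖) * ‖i‖ := by
      have := B.le_opNorm₂ (K x) i
      simp only [hB, CFA.Bmul_apply] at this
      rw [← hB] at this
      refine this.trans ?_
      have h3 : (0:ℝ) ≤ ‖B‖ := B.opNorm_nonneg
      have h4 : (0:ℝ) ≤ ‖i‖ := norm_nonneg _
      exact mul_le_mul_of_nonneg_right
        (mul_le_mul_of_nonneg_left (hCb x) h3) h4
    exact mul_le_mul_of_nonneg_left h1 (abs_nonneg cv)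
  -- integrability
  have hfg : Integrable (fun x => B (f x) (K x)) :=
    CFA.integrable_B_pair hint hKcont hCb
  have hf'g : Integrable (fun x => B (lineDeriv ℝ f x a) (K x)) :=
    CFA.integrable_B_pair hint' hKcont hCb
  have hfg' : Integrable (fun x => B (f x) (g' x)) :=
    CFA.integrable_B_pair hint hg'cont hg'bound
  -- line derivatives
  have hLf : ∀ x, HasLineDerivAt ℝ f (lineDeriv ℝ f x a) x a := by
    intro x
    rw [(hf x).lineDeriv_eq_fderiv]
    exact (hf x).hasFDerivAt.hasLineDerivAt a
  have hLg : ∀ x, HasLineDerivAt ℝ K (g' x) x a := fun x =>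
    CFA.hasLineDerivAt_kernel i hi' w a x
  have IBP := integral_bilinear_hasLineDerivAt_right_eq_neg_left_of_integrable
    (μ := volume) hf'g hfg' hfg (fun x _ => hLf x) (fun x _ => hLg x)
  -- now rewrite
  have hL : (cft p i (fun x => lineDeriv ℝ f x a) w) = ∫ x, B (lineDeriv ℝ f x a) (K x) := by
    simp only [cft, hB, CFA.Bmul_apply, hK]
  have IBP' : (∫ x, B (lineDeriv ℝ f x a) (K x)) = - ∫ x, B (f x) (g' x) := by
    rw [IBP, neg_neg]
  rw [hL, IBP']
  have hpt : ∀ x, B (f x) (g' x) = (-cv) • (B.flip i) (B (f x) (K x)) := by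
    intro x
    simp only [hg', hB, CFA.Bmul_apply, ContinuousLinearMap.flip_apply]
    rw [CFA.clMul_smul_right, CFA.clMul_assoc]
  rw [integral_congr_ae (Filter.Eventually.of_forall hpt)]
  rw [integral_smul, ContinuousLinearMap.integral_comp_comm _ hfg]
  have : (∫ x, B (f x) (K x)) = cft p i f w := by
    simp only [cft, hB, CFA.Bmul_apply, hK]
  rw [this]
  have hcv' : cv = ∑ l, a l * w l := rfl
  simp only [ContinuousLinearMap.flip_apply, hB, CFA.Bmul_apply, ← hcv']
  module
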